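/- (Recursion for the trace of the true covariance matrix.) Let Σ and Σ̂ be real symmetric positive semidefinite n×n matrices, let û be a unit eigenvector of Σ̂ with eigenvalue λ̂ ≥ 0, let β ≥ 0, σ > 0, a = √β·û, and δ = ‖Σ̂ − Σ‖. If δ ≤ λ̂, then the true one-step update Σ′ = Σ − Σ a aᵀ Σ/(aᵀΣa + σ²) satisfies tr(Σ′) ≤ tr(Σ) − βλ̂²/(βλ̂ + σ²) + 3βλ̂δ/(βλ̂ + σ² − βδ). -/

import Mathlib

open MeasureTheory ProbabilityTheory Matrix BigOperators

/-- Spectral (ℓ²-operator) norm of a real square matrix. -/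
noncomputable def specNorm {n : ℕ} (A : Matrix (Fin n) (Fin n) ℝ) : ℝ :=
  ‖LinearMap.toContinuousLinearMap (Matrix.toEuclideanLin A)‖

private lemma norm_symm' {n : ℕ} (x : Fin n → ℝ) :
    ‖(WithLp.equiv 2 (Fin n → ℝ)).symm x‖ = Real.sqrt (x ⬝ᵥ x) := by
  rw [EuclideanSpace.norm_eq]
  congr 1
  simp [dotProduct, Real.norm_eq_abs, sq_abs, sq]

private lemma inner_symm' {n : ℕ} (x y : Fin n → ℝ) :
    (inner ℝ ((WithLp.equiv 2 (Fin n → ℝ)).symm x) ((WithLp.equiv 2 (Fin n → ℝ)).symm y) : ℝ)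
      = x ⬝ᵥ y := by
  simp [PiLp.inner_apply, dotProduct, mul_comm]

private lemma dot_self_nonneg' {n : ℕ} (x : Fin n → ℝ) : 0 ≤ x ⬝ᵥ x :=
  Finset.sum_nonneg fun _ _ => mul_self_nonneg _

private lemma specNorm_mulVec_le' {n : ℕ} (M : Matrix (Fin n) (Fin n) ℝ) (v : Fin n → ℝ) :
    Real.sqrt ((M.mulVec v) ⬝ᵥ (M.mulVec v)) ≤ specNorm M * Real.sqrt (v ⬝ᵥ v) := by
  calc Real.sqrt ((M.mulVec v) ⬝ᵥ (M.mulVec v))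
      = ‖(WithLp.equiv 2 (Fin n → ℝ)).symm (M.mulVec v)‖ := (norm_symm' _).symm
    _ = ‖LinearMap.toContinuousLinearMap (Matrix.toEuclideanLin M)
          ((WithLp.equiv 2 (Fin n → ℝ)).symm v)‖ := rfl
    _ ≤ specNorm M * ‖(WithLp.equiv 2 (Fin n → ℝ)).symm v‖ :=
        (LinearMap.toContinuousLinearMap (Matrix.toEuclideanLin M)).le_opNorm _
    _ = specNorm M * Real.sqrt (v ⬝ᵥ v) := by rw [norm_symm']

private lemma abs_dot_le' {n : ℕ} (x y : Fin n → ℝ) :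
    |x ⬝ᵥ y| ≤ Real.sqrt (x ⬝ᵥ x) * Real.sqrt (y ⬝ᵥ y) := by
  have h := abs_real_inner_le_norm ((WithLp.equiv 2 (Fin n → ℝ)).symm x)
    ((WithLp.equiv 2 (Fin n → ℝ)).symm y)
  rw [inner_symm', norm_symm', norm_symm'] at h
  exact h

private lemma trace_vecMulVec' {n : ℕ} (x y : Fin n → ℝ) :
    (Matrix.vecMulVec x y).trace = x ⬝ᵥ y := by
  simp [Matrix.trace, Matrix.diag, Matrix.vecMulVec_apply, dotProduct]

private lemma alg' (β lam δ s q w : ℝ) (hβ : 0 ≤ β) (hd0 : 0 ≤ δ) (hdl : δ ≤ lam) (hs : 0 < s)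
    (hq : |lam - q| ≤ δ) (hw : (lam - δ)^2 ≤ w) :
    β*lam^2/(β*lam+s) - 3*β*lam*δ/(β*lam+s-β*δ) ≤ (β*q+s)⁻¹*(β*w) := by
  have hlam : 0 ≤ lam := le_trans hd0 hdl
  have hq1 : lam - δ ≤ q := by have := abs_le.mp hq; linarith [this.1]
  have hq2 : q ≤ lam + δ := by have := abs_le.mp hq; linarith [this.2]
  have hbd : β * δ ≤ β * lam := mul_le_mul_of_nonneg_left hdl hβ
  have hA : 0 < β*lam + s := by nlinarith
  have hAd : 0 < β*(lam+δ) + s := by nlinarith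
  have hAmd : 0 < β*lam + s - β*δ := by nlinarith
  have hden : 0 < β*q + s := by nlinarith
  have hw0 : 0 ≤ w := le_trans (sq_nonneg _) hw
  have step1 : β*(lam-δ)^2/(β*(lam+δ)+s) ≤ (β*q+s)⁻¹*(β*w) := by
    rw [inv_mul_eq_div]
    apply div_le_div₀ (by positivity) (mul_le_mul_of_nonneg_left hw hβ) hden (by nlinarith)
  have step2 : β*lam^2/(β*lam+s) - 3*β*lam*δ/(β*lam+s-β*δ) ≤ β*(lam-δ)^2/(β*(lam+δ)+s) := by
    rw [sub_le_iff_le_add, div_add_div _ _ hAd.ne' hAmd.ne', div_le_div_iff₀ hA (by positivity)]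
    have hY : 0 ≤ β*(lam^2*(β*δ) + (β*lam+s)*(2*lam*δ - δ^2)) := by
      nlinarith [mul_nonneg (mul_nonneg (mul_nonneg hβ hβ) hd0) (mul_nonneg hlam hlam),
        mul_nonneg (mul_nonneg hβ hA.le) (mul_nonneg hd0 (by linarith : (0:ℝ) ≤ 2*lam - δ))]
    have h1 : β*(lam^2*(β*δ) + (β*lam+s)*(2*lam*δ - δ^2)) ≤ 3*β*lam*δ*(β*lam+s) := by
      nlinarith [mul_nonneg (mul_nonneg (mul_nonneg hβ hlam) hd0) hs.le,
        mul_nonneg (mul_nonneg hβ hlam) hd0, mul_nonneg (mul_nonneg hβ hd0) hd0,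
        mul_nonneg (mul_nonneg (mul_nonneg hβ hβ) hlam) hd0]
    have h2 : (β*lam+s-β*δ) * (β*(lam^2*(β*δ) + (β*lam+s)*(2*lam*δ - δ^2)))
        ≤ (β*lam+s-β*δ) * (3*β*lam*δ*(β*lam+s)) := mul_le_mul_of_nonneg_left h1 hAmd.le
    have h3 : (β*lam+s-β*δ) * (3*β*lam*δ*(β*lam+s))
        ≤ (β*(lam+δ)+s) * (3*β*lam*δ*(β*lam+s)) := by
      apply mul_le_mul_of_nonneg_right (by nlinarith) (by positivity)
    nlinarith [h2, h3]
  linarith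

/-- Recursion for the trace of the true covariance matrix. If the mismatch
`δ = ‖Σ̂ − Σ‖` satisfies `δ ≤ λ̂`, then the true one-step posterior update satisfies
`tr(Σ′) ≤ tr(Σ) − βλ̂²/(βλ̂ + σ²) + 3βλ̂δ/(βλ̂ + σ² − βδ)`. -/
theorem stmt7 {n : ℕ} (S Shat : Matrix (Fin n) (Fin n) ℝ)
    (hS : S.PosSemidef) (hShat : Shat.PosSemidef)
    (uhat : Fin n → ℝ) (hu : uhat ⬝ᵥ uhat = 1)
    (lamhat : ℝ) (hlam : 0 ≤ lamhat) (heig : Shat.mulVec uhat = lamhat • uhat)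
    (β σ : ℝ) (hβ : 0 ≤ β) (hσ : 0 < σ)
    (a : Fin n → ℝ) (ha : a = Real.sqrt β • uhat)
    (δ : ℝ) (hδ : δ = specNorm (Shat - S)) (hsmall : δ ≤ lamhat)
    (S' : Matrix (Fin n) (Fin n) ℝ)
    (hS' : S' = S - (a ⬝ᵥ S.mulVec a + σ ^ 2)⁻¹ •
      Matrix.vecMulVec (S.mulVec a) (S.vecMul a)) :
    S'.trace ≤ S.trace - β * lamhat ^ 2 / (β * lamhat + σ ^ 2)
      + 3 * β * lamhat * δ / (β * lamhat + σ ^ 2 - β * δ) := by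
  set q : ℝ := uhat ⬝ᵥ S.mulVec uhat with hq_def
  set w : ℝ := (S.mulVec uhat) ⬝ᵥ (S.mulVec uhat) with hw_def
  set D : Matrix (Fin n) (Fin n) ℝ := Shat - S with hD_def
  have hd0 : 0 ≤ δ := by rw [hδ]; exact norm_nonneg _
  have hu1 : Real.sqrt (uhat ⬝ᵥ uhat) = 1 := by rw [hu, Real.sqrt_one]
  -- t = ‖D u‖
  set t : ℝ := Real.sqrt ((D.mulVec uhat) ⬝ᵥ (D.mulVec uhat)) with ht_def
  have ht0 : 0 ≤ t := Real.sqrt_nonneg _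
  have htδ : t ≤ δ := by
    have h := specNorm_mulVec_le' D uhat
    rw [hu1, mul_one] at h
    rw [hδ]; exact h
  have hDu : D.mulVec uhat = lamhat • uhat - S.mulVec uhat := by
    rw [hD_def, Matrix.sub_mulVec, heig]
  have hdotD : uhat ⬝ᵥ D.mulVec uhat = lamhat - q := by
    rw [hDu, dotProduct_sub, dotProduct_smul, smul_eq_mul, hu, mul_one]
  have habsD : |uhat ⬝ᵥ D.mulVec uhat| ≤ t := by
    have h := abs_dot_le' uhat (D.mulVec uhat)
    rwa [hu1, one_mul] at h
  have hqbound : |lamhat - q| ≤ δ := by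
    rw [← hdotD]; exact le_trans habsD htδ
  -- lower bound on w
  have hSu : S.mulVec uhat = lamhat • uhat - D.mulVec uhat := by
    rw [hDu]; abel
  have ht2 : (D.mulVec uhat) ⬝ᵥ (D.mulVec uhat) = t^2 := by
    rw [ht_def, Real.sq_sqrt (dot_self_nonneg' _)]
  have hwexp : w = lamhat^2 - 2*lamhat*(uhat ⬝ᵥ D.mulVec uhat) + t^2 := by
    rw [hw_def, hSu, dotProduct_sub, sub_dotProduct, sub_dotProduct,
      dotProduct_smul, smul_dotProduct, dotProduct_smul, smul_dotProduct,
      ht2, dotProduct_comm (D.mulVec uhat) uhat]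
    simp only [smul_eq_mul, hu]
    ring
  have hwbound : (lamhat - δ)^2 ≤ w := by
    have h1 : uhat ⬝ᵥ D.mulVec uhat ≤ t := (abs_le.mp habsD).2
    nlinarith [mul_nonneg (sub_nonneg.mpr htδ) (by linarith : (0:ℝ) ≤ 2*lamhat - t - δ)]
  -- trace computation
  have hsym : Sᵀ = S := by
    have h := hS.1.eq
    rwa [Matrix.conjTranspose_eq_transpose_of_trivial] at h
  have hvec : S.vecMul a = S.mulVec a := by
    rw [← Matrix.mulVec_transpose, hsym]
  have hmva : S.mulVec a = Real.sqrt β • S.mulVec uhat := by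
    rw [ha, Matrix.mulVec_smul]
  have hqa : a ⬝ᵥ S.mulVec a = β * q := by
    rw [hmva, ha, smul_dotProduct, dotProduct_smul, smul_eq_mul, smul_eq_mul,
      ← mul_assoc, Real.mul_self_sqrt hβ, hq_def]
  have hwa : (S.mulVec a) ⬝ᵥ (S.vecMul a) = β * w := by
    rw [hvec, hmva, smul_dotProduct, dotProduct_smul, smul_eq_mul, smul_eq_mul,
      ← mul_assoc, Real.mul_self_sqrt hβ, hw_def]
  have htrace : S'.trace = S.trace - (β*q + σ^2)⁻¹ * (β*w) := by
    rw [hS', Matrix.trace_sub, Matrix.trace_smul, trace_vecMulVec', hqa, hwa, smul_eq_mul]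
  have key := alg' β lamhat δ (σ^2) q w hβ hd0 hsmall (by positivity) hqbound hwbound
  rw [htrace]
  linarith
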